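/- Let P be the three-point FT distribution on {(a,b),(0,0),(-a,-b)} with weights p·e^{a/2}, q, p·e^{-a/2} where a > 0 is a free parameter subject to a·tanh(a/2) ≥ ⟨x⟩, p = ⟨x⟩/(2a sinh(a/2)), q = 1 - ⟨x⟩/(a tanh(a/2)), b = a⟨y⟩/⟨x⟩. Then ⟨y²⟩ = (⟨y⟩²/⟨x⟩)·(a/tanh(a/2)), which is strictly increasing in a; hence ⟨y²⟩ is minimized when a tanh(a/2) = ⟨x⟩ (i.e. q = 0, reducing to the two-point minimal distribution). -/

import Mathlib

open Real

private lemma my_hasDerivAt_tanh (x : ℝ) :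
    HasDerivAt Real.tanh (1 / Real.cosh x ^ 2) x := by
  have h := (Real.hasDerivAt_sinh x).div (Real.hasDerivAt_cosh x) (Real.cosh_pos x).ne'
  have hfun : (Real.sinh / Real.cosh) = Real.tanh := by
    funext y; rw [Pi.div_apply, Real.tanh_eq_sinh_div_cosh]
  have hval : (Real.cosh x * Real.cosh x - Real.sinh x * Real.sinh x) / Real.cosh x ^ 2
      = 1 / Real.cosh x ^ 2 := by
    rw [show Real.cosh x * Real.cosh x - Real.sinh x * Real.sinh x
        = Real.cosh x ^ 2 - Real.sinh x ^ 2 by ring, Real.cosh_sq_sub_sinh_sq]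
  rwa [hfun, hval] at h

private lemma my_tanh_pos {x : ℝ} (hx : 0 < x) : 0 < Real.tanh x := by
  rw [Real.tanh_eq_sinh_div_cosh]
  exact div_pos (Real.sinh_pos_iff.2 hx) (Real.cosh_pos x)

private lemma my_deriv (a : ℝ) (ha : 0 < a) :
    HasDerivAt (fun a : ℝ => a / Real.tanh (a / 2))
      ((1 * Real.tanh (a / 2) - a * (1 / Real.cosh (a / 2) ^ 2 * (1 / 2)))
        / Real.tanh (a / 2) ^ 2) a := by
  have h2 : HasDerivAt (fun a : ℝ => a / 2) (1 / 2) a := (hasDerivAt_id a).div_const 2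
  have ht : HasDerivAt (fun a : ℝ => Real.tanh (a / 2))
      (1 / Real.cosh (a / 2) ^ 2 * (1 / 2)) a :=
    by have := (my_hasDerivAt_tanh (a / 2)).comp a h2; exact this
  exact (hasDerivAt_id a).div ht (my_tanh_pos (by linarith)).ne'

private lemma my_deriv_pos (a : ℝ) (ha : 0 < a) :
    0 < (1 * Real.tanh (a / 2) - a * (1 / Real.cosh (a / 2) ^ 2 * (1 / 2)))
        / Real.tanh (a / 2) ^ 2 := by
  set t := a / 2 with ht
  have ht0 : 0 < t := by positivity
  have hc := Real.cosh_pos t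
  have hs := Real.sinh_pos_iff.2 ht0
  have h1 : t < Real.sinh t := Real.self_lt_sinh_iff.2 ht0
  have hc1 : 1 ≤ Real.cosh t := Real.one_le_cosh t
  have key : t < Real.sinh t * Real.cosh t := by
    calc t < Real.sinh t := h1
    _ ≤ Real.sinh t * Real.cosh t := le_mul_of_one_le_right hs.le hc1
  have hnum : 0 < 1 * Real.tanh t - a * (1 / Real.cosh t ^ 2 * (1 / 2)) := by
    rw [Real.tanh_eq_sinh_div_cosh]
    have : 1 * (Real.sinh t / Real.cosh t) - a * (1 / Real.cosh t ^ 2 * (1 / 2))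
        = (Real.sinh t * Real.cosh t - t) / Real.cosh t ^ 2 := by
      field_simp [ht]; ring
    rw [this]
    exact div_pos (by linarith) (by positivity)
  exact div_pos hnum (pow_pos (my_tanh_pos ht0) 2)

theorem three_point_second_moment_minimized_at_two_point
    (qx qy : ℝ) (hqx : 0 < qx) (hqy : qy ≠ 0) :
    (∀ a b p : ℝ, 0 < a → qx ≤ a * Real.tanh (a / 2) →
        p = qx / (2 * a * Real.sinh (a / 2)) → b = a * qy / qx →
        p * Real.exp (a / 2) * b ^ 2 + p * Real.exp (-(a / 2)) * (-b) ^ 2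
          = (qy ^ 2 / qx) * (a / Real.tanh (a / 2))) ∧
    StrictMonoOn (fun a : ℝ => (qy ^ 2 / qx) * (a / Real.tanh (a / 2)))
      (Set.Ioi 0) ∧
    (∀ a₀ a : ℝ, 0 < a₀ → a₀ * Real.tanh (a₀ / 2) = qx →
        0 < a → qx ≤ a * Real.tanh (a / 2) →
        (qy ^ 2 / qx) * (a₀ / Real.tanh (a₀ / 2))
          ≤ (qy ^ 2 / qx) * (a / Real.tanh (a / 2))) := by
  have hc : 0 < qy ^ 2 / qx := div_pos (by positivity) hqx
  have hmono : StrictMonoOn (fun a : ℝ => (qy ^ 2 / qx) * (a / Real.tanh (a / 2)))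
      (Set.Ioi 0) := by
    have hderiv : ∀ a ∈ Set.Ioi (0 : ℝ),
        HasDerivAt (fun a : ℝ => (qy ^ 2 / qx) * (a / Real.tanh (a / 2)))
          ((qy ^ 2 / qx) * ((1 * Real.tanh (a / 2)
            - a * (1 / Real.cosh (a / 2) ^ 2 * (1 / 2))) / Real.tanh (a / 2) ^ 2)) a :=
      fun a ha => (my_deriv a ha).const_mul _
    apply strictMonoOn_of_deriv_pos (convex_Ioi 0)
    · exact fun a ha => (hderiv a ha).continuousAt.continuousWithinAt
    · intro a ha
      rw [interior_Ioi] at ha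
      rw [(hderiv a ha).deriv]
      exact mul_pos hc (my_deriv_pos a ha)
  refine ⟨?_, hmono, ?_⟩
  · intro a b p ha _ hp hb
    have hs : Real.sinh (a / 2) ≠ 0 := (Real.sinh_pos_iff.2 (by linarith)).ne'
    have hcosh : Real.cosh (a / 2) ≠ 0 := (Real.cosh_pos _).ne'
    have hexp : Real.exp (a / 2) + Real.exp (-(a / 2)) = 2 * Real.cosh (a / 2) := by
      rw [Real.cosh_eq]; ring
    subst hp hb
    rw [Real.tanh_eq_sinh_div_cosh]
    have : qx / (2 * a * Real.sinh (a / 2)) * Real.exp (a / 2) * (a * qy / qx) ^ 2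
        + qx / (2 * a * Real.sinh (a / 2)) * Real.exp (-(a / 2)) * (-(a * qy / qx)) ^ 2
        = qx / (2 * a * Real.sinh (a / 2)) * (a * qy / qx) ^ 2
          * (Real.exp (a / 2) + Real.exp (-(a / 2))) := by ring
    rw [this, hexp]
    field_simp
  · intro a₀ a ha₀ heq ha hle
    have ha₀a : a₀ ≤ a := by
      by_contra h
      push_neg at h
      have htanh : Real.tanh (a / 2) < Real.tanh (a₀ / 2) := by
        have hsub : Real.sinh (a / 2 - a₀ / 2) < 0 :=
          Real.sinh_neg_iff.2 (by linarith)
        rw [Real.sinh_sub] at hsub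
        rw [Real.tanh_eq_sinh_div_cosh, Real.tanh_eq_sinh_div_cosh,
          div_lt_div_iff₀ (Real.cosh_pos _) (Real.cosh_pos _)]
        linarith
      have : a * Real.tanh (a / 2) < a₀ * Real.tanh (a₀ / 2) :=
        mul_lt_mul h htanh.le (my_tanh_pos (by linarith)) ha₀.le
      linarith [heq ▸ this]
    rcases eq_or_lt_of_le ha₀a with h | h
    · rw [h]
    · exact (hmono (Set.mem_Ioi.2 ha₀) (Set.mem_Ioi.2 ha) h).le
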